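/- In the association scheme on the 240 roots of E_8 with relations given by inner products 2, 1, 0, -1, -2 (indexed 0 through 4), the intersection number p_{13}^1 equals 1; that is, for any two roots x, y with ⟨x,y⟩ = 1, there is exactly one root z with ⟨z,x⟩ = 1 and ⟨z,y⟩ = -1. -/

import Mathlib

/-- The root system `E_8` in `ℝ^8` (240 vectors of squared norm 2). -/
def rootsE8 : Set (Fin 8 → ℝ) :=
  {v | ∃ i j : Fin 8, i < j ∧
    (v = Pi.single i 1 + Pi.single j (1 : ℝ) ∨
     v = Pi.single i 1 - Pi.single j (1 : ℝ) ∨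
     v = -(Pi.single i 1 + Pi.single j (1 : ℝ)) ∨
     v = -(Pi.single i 1 - Pi.single j (1 : ℝ)))} ∪
  {v | ∃ c : Fin 8 → ℝ, (∀ i, c i = 1 ∨ c i = -1) ∧ (∏ i, c i) = 1 ∧
    v = (1 / 2 : ℝ) • c}

/-- The standard inner product on `ℝ^8`. -/
def dot (x y : Fin 8 → ℝ) : ℝ := ∑ i, x i * y i

/-! ### Auxiliary lemmas -/

def pm (a : ℝ) : Prop := a = 1 ∨ a = -1

lemma pm_neg {a : ℝ} (h : pm a) : pm (-a) := by rcases h with rfl|rfl <;> simp [pm]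

lemma pm_mul {a b : ℝ} (ha : pm a) (hb : pm b) : pm (a*b) := by
  rcases ha with rfl|rfl <;> rcases hb with rfl|rfl <;> simp [pm]

lemma pm_cancel {a b : ℝ} (ha : pm a) (h : a * b = 1) : b = a := by
  rcases ha with rfl|rfl <;> nlinarith

lemma pm_sq {a : ℝ} (ha : pm a) : a * a = 1 := by rcases ha with rfl|rfl <;> norm_num

lemma pm_neg_of_ne {a b : ℝ} (ha : pm a) (hb : pm b) (h : a ≠ b) : b = -a := by
  rcases ha with rfl|rfl <;> rcases hb with rfl|rfl <;>
    first | (exact absurd rfl h) | norm_num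

lemma dot_single_left (i : Fin 8) (a : ℝ) (y z : Fin 8 → ℝ) :
    dot (a • (Pi.single i 1 : Fin 8 → ℝ) + y) z = a * z i + dot y z := by
  simp only [dot, Pi.single_apply, Pi.add_apply, Pi.smul_apply, smul_eq_mul, mul_one,
    add_mul, mul_ite, ite_mul, mul_zero, zero_mul, Finset.sum_add_distrib, Finset.sum_ite_eq',
    Finset.mem_univ, if_true]

lemma dot_single (i : Fin 8) (a : ℝ) (z : Fin 8 → ℝ) :
    dot (a • (Pi.single i 1 : Fin 8 → ℝ)) z = a * z i := by
  simp only [dot, Pi.single_apply, Pi.smul_apply, smul_eq_mul, mul_one,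
    mul_ite, ite_mul, mul_zero, zero_mul, Finset.sum_ite_eq', Finset.mem_univ, if_true]

lemma dot_t1 (i j : Fin 8) (a b : ℝ) (z : Fin 8 → ℝ) :
    dot (a • (Pi.single i 1 : Fin 8 → ℝ) + b • (Pi.single j 1 : Fin 8 → ℝ)) z
      = a * z i + b * z j := by
  rw [dot_single_left, dot_single]

lemma dot_comm (x y : Fin 8 → ℝ) : dot x y = dot y x := by
  simp [dot, mul_comm]

lemma dot_sub_left (x y z : Fin 8 → ℝ) : dot (x - y) z = dot x z - dot y z := by
  simp [dot, sub_mul, Finset.sum_sub_distrib]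

lemma dot_smul_left (a : ℝ) (x z : Fin 8 → ℝ) : dot (a • x) z = a * dot x z := by
  simp [dot, Finset.mul_sum, mul_assoc]

lemma dot_sub_self (u w : Fin 8 → ℝ) :
    dot (u - w) (u - w) = dot u u - 2 * dot u w + dot w w := by
  have h : ∀ i, (u i - w i) * (u i - w i)
      = u i * u i - 2 * (u i * w i) + w i * w i := fun i => by ring
  simp only [dot, Pi.sub_apply]
  rw [Finset.sum_congr rfl (fun i _ => h i)]
  rw [Finset.sum_add_distrib, Finset.sum_sub_distrib, ← Finset.mul_sum]

lemma eq_of_dot_self_sub (x y : Fin 8 → ℝ) (h : dot (x-y) (x-y) = 0) : x = y := by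
  have h2 := (Finset.sum_eq_zero_iff_of_nonneg
      (fun i (_ : i ∈ Finset.univ) => mul_self_nonneg ((x-y) i))).mp h
  funext i
  have h3 := mul_self_eq_zero.mp (h2 i (Finset.mem_univ i))
  have h4 : x i - y i = 0 := h3
  linarith

lemma mem1 {i j : Fin 8} (h : i ≠ j) {a b : ℝ} (ha : pm a) (hb : pm b) :
    a • (Pi.single i 1 : Fin 8 → ℝ) + b • (Pi.single j 1 : Fin 8 → ℝ) ∈ rootsE8 := by
  rcases h.lt_or_gt with hij | hij
  · left
    refine ⟨i, j, hij, ?_⟩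
    rcases ha with rfl | rfl <;> rcases hb with rfl | rfl
    · exact Or.inl (by module)
    · exact Or.inr (Or.inl (by module))
    · exact Or.inr (Or.inr (Or.inr (by module)))
    · exact Or.inr (Or.inr (Or.inl (by module)))
  · left
    refine ⟨j, i, hij, ?_⟩
    rcases ha with rfl | rfl <;> rcases hb with rfl | rfl
    · exact Or.inl (by module)
    · exact Or.inr (Or.inr (Or.inr (by module)))
    · exact Or.inr (Or.inl (by module))
    · exact Or.inr (Or.inr (Or.inl (by module)))

lemma mem2 {c : Fin 8 → ℝ} (hc : ∀ i, pm (c i)) (hp : (∏ i, c i) = 1) :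
    (1 / 2 : ℝ) • c ∈ rootsE8 := Or.inr ⟨c, hc, hp, rfl⟩

lemma mem_elim {v : Fin 8 → ℝ} (h : v ∈ rootsE8) :
    (∃ i j : Fin 8, ∃ a b : ℝ, i ≠ j ∧ pm a ∧ pm b ∧
      v = a • (Pi.single i 1 : Fin 8 → ℝ) + b • (Pi.single j 1 : Fin 8 → ℝ)) ∨
    (∃ c : Fin 8 → ℝ, (∀ i, pm (c i)) ∧ (∏ i, c i) = 1 ∧ v = (1 / 2 : ℝ) • c) := by
  rcases h with ⟨i, j, hij, h | h | h | h⟩ | ⟨c, hc, hp, hv⟩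
  · exact Or.inl ⟨i, j, 1, 1, hij.ne, Or.inl rfl, Or.inl rfl, by rw [h]; module⟩
  · exact Or.inl ⟨i, j, 1, -1, hij.ne, Or.inl rfl, Or.inr rfl, by rw [h]; module⟩
  · exact Or.inl ⟨i, j, -1, -1, hij.ne, Or.inr rfl, Or.inr rfl, by rw [h]; module⟩
  · exact Or.inl ⟨i, j, -1, 1, hij.ne, Or.inr rfl, Or.inl rfl, by rw [h]; module⟩
  · exact Or.inr ⟨c, hc, hp, hv⟩

lemma prod_flip6 (i j : Fin 8) (hij : i ≠ j) (c : Fin 8 → ℝ) (hp : ∏ k, c k = 1)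
    (c' : Fin 8 → ℝ) (hc' : ∀ k, c' k = (if k = i ∨ k = j then (1:ℝ) else -1) * c k) :
    ∏ k, c' k = 1 := by
  classical
  rw [Finset.prod_congr rfl (fun k _ => hc' k), Finset.prod_mul_distrib, hp, mul_one,
    Finset.prod_ite]
  have hfil : Finset.univ.filter (fun k => k = i ∨ k = j) = {i, j} := by ext k; simp
  have hcards := Finset.card_filter_add_card_filter_not (s := Finset.univ)
    (p := fun k : Fin 8 => k = i ∨ k = j)
  rw [hfil, Finset.card_pair hij] at hcards
  simp only [Finset.card_univ, Fintype.card_fin] at hcards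
  have h6 : (Finset.univ.filter (fun k : Fin 8 => ¬(k = i ∨ k = j))).card = 6 := by omega
  simp only [not_or] at h6
  simp [h6]
  norm_num

lemma prod_flip2 (i j : Fin 8) (hij : i ≠ j) (c : Fin 8 → ℝ) (hp : ∏ k, c k = 1)
    (c' : Fin 8 → ℝ) (hc' : ∀ k, c' k = (if k = i ∨ k = j then (-1:ℝ) else 1) * c k) :
    ∏ k, c' k = 1 := by
  classical
  rw [Finset.prod_congr rfl (fun k _ => hc' k), Finset.prod_mul_distrib, hp, mul_one,
    Finset.prod_ite]
  have hfil : Finset.univ.filter (fun k => k = i ∨ k = j) = {i, j} := by ext k; simp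
  rw [hfil, Finset.prod_const, Finset.card_pair hij]
  norm_num

lemma norm_two {v : Fin 8 → ℝ} (h : v ∈ rootsE8) : dot v v = 2 := by
  rcases mem_elim h with ⟨i, j, a, b, hij, ha, hb, rfl⟩ | ⟨c, hc, hp, rfl⟩
  · rw [dot_t1]
    simp only [Pi.add_apply, Pi.smul_apply, Pi.single_apply, smul_eq_mul, mul_one]
    rw [if_neg hij, if_neg (Ne.symm hij)]
    simp only [if_true, eq_self_iff_true, mul_one, mul_zero, add_zero, zero_add]
    have h1 := pm_sq ha; have h2 := pm_sq hb; nlinarith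
  · have h4 : ∀ k, ((1/2 : ℝ) * c k) * ((1/2 : ℝ) * c k) = 1/4 := by
      intro k; have := pm_sq (hc k); nlinarith
    simp only [dot, Pi.smul_apply, smul_eq_mul]
    rw [Finset.sum_congr rfl (fun k _ => h4 k)]
    simp
    norm_num

lemma roots_closure {x y : Fin 8 → ℝ} (hx : x ∈ rootsE8) (hy : y ∈ rootsE8)
    (hxy : dot x y = 1) : x - y ∈ rootsE8 := by
  classical
  rcases mem_elim hx with ⟨i, j, a, b, hij, ha, hb, rfl⟩ | ⟨c, hc, hp, rfl⟩ <;>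
    rcases mem_elim hy with ⟨k, l, c2, d, hkl, hc2, hd, rfl⟩ | ⟨e, he, hpe, rfl⟩
  · -- Case A : both type 1
    rw [dot_t1] at hxy
    simp only [Pi.add_apply, Pi.smul_apply, Pi.single_apply, smul_eq_mul, mul_one] at hxy
    by_cases hik : i = k
    · subst hik
      by_cases hjl : j = l
      · subst hjl
        exfalso
        simp only [if_pos rfl, if_neg hkl, if_neg (Ne.symm hij), mul_zero, mul_one,
          add_zero, zero_add] at hxy
        rcases ha with rfl|rfl <;> rcases hb with rfl|rfl <;>
          rcases hc2 with rfl|rfl <;> rcases hd with rfl|rfl <;> norm_num at hxy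
      · simp only [if_pos rfl, if_neg hkl, if_neg (Ne.symm hij), if_neg hjl,
          mul_zero, mul_one, add_zero, zero_add] at hxy
        have hca : c2 = a := by
          rcases ha with rfl|rfl <;> rcases hc2 with rfl|rfl <;> norm_num at hxy <;> norm_num
        rw [hca]
        have hrw : (a • (Pi.single i 1 : Fin 8 → ℝ) + b • (Pi.single j 1 : Fin 8 → ℝ))
            - (a • (Pi.single i 1 : Fin 8 → ℝ) + d • (Pi.single l 1 : Fin 8 → ℝ))
            = b • (Pi.single j 1 : Fin 8 → ℝ) + (-d) • (Pi.single l 1 : Fin 8 → ℝ) := by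
          module
        rw [hrw]
        exact mem1 hjl hb (pm_neg hd)
    · by_cases hil : i = l
      · subst hil
        by_cases hjk : j = k
        · subst hjk
          exfalso
          simp only [if_pos rfl, if_neg hik, if_neg (Ne.symm hkl), if_neg (Ne.symm hij),
            mul_zero, mul_one, add_zero, zero_add] at hxy
          rcases ha with rfl|rfl <;> rcases hb with rfl|rfl <;>
            rcases hc2 with rfl|rfl <;> rcases hd with rfl|rfl <;> norm_num at hxy
        · simp only [if_pos rfl, if_neg hik, if_neg hjk, if_neg (Ne.symm hij),
            mul_zero, mul_one, add_zero, zero_add] at hxy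
          have hda : d = a := by
            rcases ha with rfl|rfl <;> rcases hd with rfl|rfl <;> norm_num at hxy <;> norm_num
          rw [hda]
          have hrw : (a • (Pi.single i 1 : Fin 8 → ℝ) + b • (Pi.single j 1 : Fin 8 → ℝ))
              - (c2 • (Pi.single k 1 : Fin 8 → ℝ) + a • (Pi.single i 1 : Fin 8 → ℝ))
              = b • (Pi.single j 1 : Fin 8 → ℝ) + (-c2) • (Pi.single k 1 : Fin 8 → ℝ) := by
            module
          rw [hrw]
          exact mem1 hjk hb (pm_neg hc2)
      · by_cases hjk : j = k
        · subst hjk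
          by_cases hjl2 : i = l
          · exact absurd hjl2 hil
          · simp only [if_pos rfl, if_neg hik, if_neg hil, if_neg hkl,
              mul_zero, mul_one, add_zero, zero_add] at hxy
            have hcb : c2 = b := by
              rcases hb with rfl|rfl <;> rcases hc2 with rfl|rfl <;> norm_num at hxy <;> norm_num
            rw [hcb]
            have hrw : (a • (Pi.single i 1 : Fin 8 → ℝ) + b • (Pi.single j 1 : Fin 8 → ℝ))
                - (b • (Pi.single j 1 : Fin 8 → ℝ) + d • (Pi.single l 1 : Fin 8 → ℝ))
                = a • (Pi.single i 1 : Fin 8 → ℝ) + (-d) • (Pi.single l 1 : Fin 8 → ℝ) := by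
              module
            rw [hrw]
            exact mem1 hil ha (pm_neg hd)
        · by_cases hjl : j = l
          · subst hjl
            simp only [if_pos rfl, if_neg hik, if_neg hil, if_neg hjk,
              mul_zero, mul_one, add_zero, zero_add] at hxy
            have hdb : d = b := by
              rcases hb with rfl|rfl <;> rcases hd with rfl|rfl <;> norm_num at hxy <;> norm_num
            rw [hdb]
            have hrw : (a • (Pi.single i 1 : Fin 8 → ℝ) + b • (Pi.single j 1 : Fin 8 → ℝ))
                - (c2 • (Pi.single k 1 : Fin 8 → ℝ) + b • (Pi.single j 1 : Fin 8 → ℝ))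
                = a • (Pi.single i 1 : Fin 8 → ℝ) + (-c2) • (Pi.single k 1 : Fin 8 → ℝ) := by
              module
            rw [hrw]
            exact mem1 hik ha (pm_neg hc2)
          · exfalso
            simp only [if_neg hik, if_neg hil, if_neg hjk, if_neg hjl,
              mul_zero, add_zero] at hxy
            norm_num at hxy
  · -- Case B : type 1 minus type 2
    rw [dot_t1] at hxy
    simp only [Pi.smul_apply, smul_eq_mul] at hxy
    have hkey : a * e i = 1 ∧ b * e j = 1 := by
      rcases pm_mul ha (he i) with h1|h1 <;> rcases pm_mul hb (he j) with h2|h2 <;>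
        first
          | exact ⟨h1, h2⟩
          | (exfalso; nlinarith [h1, h2, hxy])
    have hei : e i = a := pm_cancel ha hkey.1
    have hej : e j = b := pm_cancel hb hkey.2
    set c' : Fin 8 → ℝ := fun k => if k = i ∨ k = j then e k else -e k with hc'def
    have hc'val : ∀ k, c' k = (if k = i ∨ k = j then (1:ℝ) else -1) * e k := by
      intro k; simp only [hc'def]; split <;> ring
    have hc'pm : ∀ k, pm (c' k) := by
      intro k; simp only [hc'def]; split
      · exact he k
      · exact pm_neg (he k)
    have hrw : (a • (Pi.single i 1 : Fin 8 → ℝ) + b • (Pi.single j 1 : Fin 8 → ℝ))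
        - (1/2 : ℝ) • e = (1/2 : ℝ) • c' := by
      funext m
      simp only [Pi.sub_apply, Pi.add_apply, Pi.smul_apply, Pi.single_apply, smul_eq_mul,
        hc'def]
      by_cases hmi : m = i
      · subst hmi
        rw [if_pos rfl, if_neg hij, if_pos (Or.inl rfl), hei]; ring
      · by_cases hmj : m = j
        · subst hmj
          rw [if_neg hmi, if_pos rfl, if_pos (Or.inr rfl), hej]; ring
        · rw [if_neg hmi, if_neg hmj, if_neg (by tauto)]; ring
    rw [hrw]
    exact mem2 hc'pm (prod_flip6 i j hij e hpe c' hc'val)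
  · -- Case C : type 2 minus type 1
    rw [dot_comm, dot_t1] at hxy
    simp only [Pi.smul_apply, smul_eq_mul] at hxy
    have hkey : c2 * c k = 1 ∧ d * c l = 1 := by
      rcases pm_mul hc2 (hc k) with h1|h1 <;> rcases pm_mul hd (hc l) with h2|h2 <;>
        first
          | exact ⟨h1, h2⟩
          | (exfalso; nlinarith [h1, h2, hxy])
    have hck : c k = c2 := pm_cancel hc2 hkey.1
    have hcl : c l = d := pm_cancel hd hkey.2
    set c' : Fin 8 → ℝ := fun m => if m = k ∨ m = l then -c m else c m with hc'def
    have hc'val : ∀ m, c' m = (if m = k ∨ m = l then (-1:ℝ) else 1) * c m := by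
      intro m; simp only [hc'def]; split <;> ring
    have hc'pm : ∀ m, pm (c' m) := by
      intro m; simp only [hc'def]; split
      · exact pm_neg (hc m)
      · exact hc m
    have hrw : (1/2 : ℝ) • c
        - (c2 • (Pi.single k 1 : Fin 8 → ℝ) + d • (Pi.single l 1 : Fin 8 → ℝ))
        = (1/2 : ℝ) • c' := by
      funext m
      simp only [Pi.sub_apply, Pi.add_apply, Pi.smul_apply, Pi.single_apply, smul_eq_mul,
        hc'def]
      by_cases hmk : m = k
      · subst hmk
        rw [if_pos rfl, if_neg hkl, if_pos (Or.inl rfl), ← hck]; ring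
      · by_cases hml : m = l
        · subst hml
          rw [if_neg hmk, if_pos rfl, if_pos (Or.inr rfl), ← hcl]; ring
        · rw [if_neg hmk, if_neg hml, if_neg (by tauto)]; ring
    rw [hrw]
    exact mem2 hc'pm (prod_flip2 k l hkl c hp c' hc'val)
  · -- Case D : both type 2
    rw [dot_smul_left, dot_comm, dot_smul_left] at hxy
    have hsum : ∑ m, c m * e m = 4 := by
      simp only [dot] at hxy
      have : (∑ m, e m * c m) = ∑ m, c m * e m :=
        Finset.sum_congr rfl (fun m _ => mul_comm _ _)
      nlinarith [hxy, this]
    -- find the two indices where c and e differ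
    set S := Finset.univ.filter (fun m => c m ≠ e m) with hS
    have hmemS : ∀ m, m ∈ S ↔ c m ≠ e m := by intro m; simp [hS]
    have h1 : ∀ m ∈ S, c m * e m = -1 := by
      intro m hm
      have hne := (hmemS m).mp hm
      have hh := pm_neg_of_ne (hc m) (he m) hne
      rw [hh]; have := pm_sq (hc m); nlinarith
    have h2 : ∀ m ∈ Finset.univ.filter (fun m => ¬ c m ≠ e m), c m * e m = 1 := by
      intro m hm
      simp only [Finset.mem_filter, not_not] at hm
      rw [← hm.2]; exact pm_sq (hc m)
    have hsplit := Finset.sum_filter_add_sum_filter_not Finset.univ (fun m => c m ≠ e m)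
      (fun m => c m * e m)
    rw [Finset.sum_congr rfl h1, Finset.sum_congr rfl h2, Finset.sum_const, Finset.sum_const,
      hsum] at hsplit
    have hcards := Finset.card_filter_add_card_filter_not (s := Finset.univ)
      (p := fun m => c m ≠ e m)
    simp only [Finset.card_univ, Fintype.card_fin] at hcards
    have hScard : S.card = 2 := by
      have h8 : (S.card : ℝ) + ((Finset.univ.filter (fun m => ¬ c m ≠ e m)).card : ℝ) = 8 := by
        exact_mod_cast hcards
      simp only [nsmul_eq_mul, mul_neg_one, mul_one] at hsplit
      have : (S.card : ℝ) = 2 := by linarith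
      exact_mod_cast this
    obtain ⟨i, j, hij, hSij⟩ := Finset.card_eq_two.mp hScard
    have hein : ∀ m, m = i ∨ m = j → e m = -c m := by
      intro m hm
      have hmS : m ∈ S := by rw [hSij]; simp [hm]
      exact pm_neg_of_ne (hc m) (he m) ((hmemS m).mp hmS)
    have heout : ∀ m, m ≠ i → m ≠ j → e m = c m := by
      intro m hmi hmj
      have hmS : m ∉ S := by rw [hSij]; simp [hmi, hmj]
      have := (hmemS m).not.mp hmS
      push_neg at this
      exact this.symm
    have hrw : (1/2 : ℝ) • c - (1/2 : ℝ) • e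
        = c i • (Pi.single i 1 : Fin 8 → ℝ) + c j • (Pi.single j 1 : Fin 8 → ℝ) := by
      funext m
      simp only [Pi.sub_apply, Pi.add_apply, Pi.smul_apply, Pi.single_apply, smul_eq_mul]
      by_cases hmi : m = i
      · subst hmi
        rw [if_pos rfl, if_neg hij, hein m (Or.inl rfl)]; ring
      · by_cases hmj : m = j
        · subst hmj
          rw [if_neg hmi, if_pos rfl, hein m (Or.inr rfl)]; ring
        · rw [if_neg hmi, if_neg hmj, heout m hmi hmj]; ring
    rw [hrw]
    exact mem1 hij (hc i) (hc j)

/-- In the `E_8` association scheme, `p_{13}^1 = 1`: for any roots `x, y` with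
`⟨x, y⟩ = 1` there is exactly one root `z` with `⟨z, x⟩ = 1` and `⟨z, y⟩ = -1`. -/
theorem stmt_15 :
    ∀ x ∈ rootsE8, ∀ y ∈ rootsE8, dot x y = 1 →
      ∃! z, z ∈ rootsE8 ∧ dot z x = 1 ∧ dot z y = -1 := by
  intro x hx y hy hxy
  refine ⟨x - y, ⟨roots_closure hx hy hxy, ?_, ?_⟩, ?_⟩
  · rw [dot_sub_left, norm_two hx, dot_comm y x, hxy]; norm_num
  · rw [dot_sub_left, hxy, norm_two hy]; norm_num
  · rintro z ⟨hz, hzx, hzy⟩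
    have h1 : dot z (x - y) = 2 := by
      rw [dot_comm, dot_sub_left, dot_comm x z, dot_comm y z, hzx, hzy]; norm_num
    have h0 : dot (z - (x - y)) (z - (x - y)) = 0 := by
      rw [dot_sub_self, norm_two hz, norm_two (roots_closure hx hy hxy), h1]; norm_num
    exact eq_of_dot_self_sub _ _ h0
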